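/- The exact output range { ReLU (2*x + 3*y) − ReLU (x − y) : x ∈ Set.Icc (4:ℝ) 6, y ∈ Set.Icc (3:ℝ) 4 } equals Set.Icc 16 22, where ReLU t = max t 0; and Set.Icc (16:ℝ) 22 is a strict subset of Set.Icc 14 24, the bound obtained by interval arithmetic (Set.Icc (17:ℝ) 24 + Set.Icc (−3:ℝ) 0 = Set.Icc 14 24 as a Minkowski sum, the second interval being the negation of the hidden range [0,3]). -/
import Mathlib


open Pointwise

/-- The ReLU activation function. -/
def ReLU (t : ℝ) : ℝ := max t 0

/-- Example 4(a): the exact output range [16,22] is strictly contained in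
the interval-arithmetic bound [14,24]. -/
theorem exact_range_vs_interval_example_a :
    ({ z : ℝ | ∃ x ∈ Set.Icc (4 : ℝ) 6, ∃ y ∈ Set.Icc (3 : ℝ) 4,
        z = ReLU (2 * x + 3 * y) - ReLU (x - y) } = Set.Icc (16 : ℝ) 22) ∧
    (Set.Icc (17 : ℝ) 24 + Set.Icc (-3 : ℝ) 0 = Set.Icc (14 : ℝ) 24) ∧
    Set.Icc (16 : ℝ) 22 ⊂ Set.Icc (14 : ℝ) 24 := by
  refine ⟨?_, ?_, ?_⟩
  · ext z
    simp only [Set.mem_setOf_eq, Set.mem_Icc]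
    constructor
    · rintro ⟨x, ⟨hx1, hx2⟩, y, ⟨hy1, hy2⟩, rfl⟩
      have h1 : ReLU (2 * x + 3 * y) = 2 * x + 3 * y := by
        unfold ReLU; rw [max_eq_left]; linarith
      have h2 : ReLU (x - y) = x - y := by
        unfold ReLU; rw [max_eq_left]; linarith
      rw [h1, h2]; constructor <;> linarith
    · rintro ⟨h1, h2⟩
      by_cases h : z ≤ 20
      · refine ⟨4, ⟨le_refl _, by norm_num⟩, (z - 4) / 4, ⟨by linarith, by linarith⟩, ?_⟩
        have ha : ReLU (2 * 4 + 3 * ((z - 4) / 4)) = 2 * 4 + 3 * ((z - 4) / 4) := by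
          unfold ReLU; rw [max_eq_left]; linarith
        have hb : ReLU (4 - (z - 4) / 4) = 4 - (z - 4) / 4 := by
          unfold ReLU; rw [max_eq_left]; linarith
        rw [ha, hb]; ring
      · refine ⟨z - 16, ⟨by linarith, by linarith⟩, 4, ⟨by norm_num, le_refl _⟩, ?_⟩
        have ha : ReLU (2 * (z - 16) + 3 * 4) = 2 * (z - 16) + 3 * 4 := by
          unfold ReLU; rw [max_eq_left]; linarith
        have hb : ReLU (z - 16 - 4) = z - 16 - 4 := by
          unfold ReLU; rw [max_eq_left]; linarith
        rw [ha, hb]; ring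
  · rw [Set.Icc_add_Icc] <;> norm_num
  · rw [Set.ssubset_iff_of_subset (Set.Icc_subset_Icc (by norm_num) (by norm_num))]
    exact ⟨14, by norm_num, by norm_num⟩
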